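/- Let G = (V,E) be the hypergraph whose edge set E consists of all subsets of V of cardinality |V| − 1, where |V| ≥ 3. Then the nest-set width of G equals |V| − 1, i.e., every nest-set elimination order of G has some element of cardinality at least |V| − 1. -/

import Mathlib

open Finset

/-- `N` is a nest-set of the hypergraph with edge set `E`: the family
`{e \ N : e ∈ E, e ∩ N ≠ ∅}` is totally ordered by inclusion. -/
def IsNestSet {V : Type*} [DecidableEq V] (E : Finset (Finset V)) (N : Finset V) : Prop :=
  ∀ e₁ ∈ E, ∀ e₂ ∈ E, (e₁ ∩ N).Nonempty → (e₂ ∩ N).Nonempty →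
    e₁ \ N ⊆ e₂ \ N ∨ e₂ \ N ⊆ e₁ \ N

/-- `v` is a nest point: the edges containing `v` are totally ordered by inclusion. -/
def IsNestPoint {V : Type*} (E : Finset (Finset V)) (v : V) : Prop :=
  ∀ e₁ ∈ E, ∀ e₂ ∈ E, v ∈ e₁ → v ∈ e₂ → e₁ ⊆ e₂ ∨ e₂ ⊆ e₁

/-- The edge set of the hypergraph `G - N`. -/
def hreduce {V : Type*} [DecidableEq V] (E : Finset (Finset V)) (N : Finset V) :
    Finset (Finset V) :=
  (E.image (fun e => e \ N)).filter (fun e => 2 ≤ e.card)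

/-- `gap(G, N) = max { |N| - |e ∩ N| : e ∈ E, e ∩ N ≠ ∅ }`. -/
def hgap {V : Type*} [DecidableEq V] (E : Finset (Finset V)) (N : Finset V) : ℕ :=
  (E.filter (fun e => (e ∩ N).Nonempty)).sup (fun e => N.card - (e ∩ N).card)

/-- `L = N₁, …, N_t` is a nest-set elimination order of the hypergraph with node set `Vs`
and edge set `E`. -/
def IsElimOrder {V : Type*} [DecidableEq V] (Vs : Finset V) (E : Finset (Finset V))
    (L : List (Finset V)) : Prop :=
  L.Pairwise Disjoint ∧ (∀ N ∈ L, N.Nonempty) ∧ L.foldr (· ∪ ·) ∅ = Vs ∧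
  ∀ i : Fin L.length, IsNestSet ((L.take i).foldl hreduce E) (L.get i)

/-- The nest-set width of an elimination order: maximum cardinality of an element. -/
def nswOf {V : Type*} (L : List (Finset V)) : ℕ := (L.map Finset.card).foldr max 0

/-- The nest-set gap of an elimination order: max over `i` of
`gap(G - N₁ - ⋯ - N_{i-1}, N_i)`. -/
def nsgOf {V : Type*} [DecidableEq V] (E : Finset (Finset V)) (L : List (Finset V)) : ℕ :=
  ((List.range L.length).map
    (fun i => hgap ((L.take i).foldl hreduce E) (L.getD i ∅))).foldr max 0

/-- For the hypergraph `G = (V, E)` whose edges are all subsets of `V` of cardinality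
`|V| - 1` (with `|V| ≥ 3`), every nest-set elimination order of `G` has an element of
cardinality at least `|V| - 1`, i.e. `nsw(G) = |V| - 1`. -/
theorem stmt_2 {V : Type*} [Fintype V] [DecidableEq V] (h3 : 3 ≤ Fintype.card V)
    (L : List (Finset V))
    (hL : IsElimOrder Finset.univ
      (Finset.univ.powerset.filter (fun e : Finset V => e.card = Fintype.card V - 1)) L) :
    ∃ N ∈ L, Fintype.card V - 1 ≤ N.card := by
  obtain ⟨hpw, hnonempty, hcov, hnest⟩ := hL
  have hcard : (Finset.univ : Finset V).card = Fintype.card V := Finset.card_univ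
  have hLne : 0 < L.length := by
    rcases L with _ | ⟨a, L⟩
    · simp only [List.foldr] at hcov
      rw [← hcov] at hcard
      simp at hcard; omega
    · simp
  set N := L.get ⟨0, hLne⟩ with hNdef
  refine ⟨N, L.get_mem _, ?_⟩
  by_contra hlt
  push_neg at hlt
  have hNmem : N ∈ L := L.get_mem _
  have hNne : N.Nonempty := hnonempty N hNmem
  have hNsub : N ⊆ Finset.univ := Finset.subset_univ N
  have hnest0 := hnest ⟨0, hLne⟩
  simp only [List.take_zero, List.foldl] at hnest0
  -- N.card ≤ card V - 2, so univ \ N has at least 2 elements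
  have h2 : 2 ≤ (Finset.univ \ N).card := by
    rw [Finset.card_sdiff_of_subset hNsub, hcard]; omega
  obtain ⟨u, hu, v, hv, huv⟩ := Finset.one_lt_card.mp (by omega : 1 < (Finset.univ \ N).card)
  have huN : u ∉ N := (Finset.mem_sdiff.mp hu).2
  have hvN : v ∉ N := (Finset.mem_sdiff.mp hv).2
  set e₁ : Finset V := Finset.univ \ {u} with he1
  set e₂ : Finset V := Finset.univ \ {v} with he2
  have hcard1 : e₁.card = Fintype.card V - 1 := by
    rw [he1, Finset.card_sdiff_of_subset (Finset.singleton_subset_iff.mpr (Finset.mem_univ u)),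
      Finset.card_singleton, hcard]
  have hcard2 : e₂.card = Fintype.card V - 1 := by
    rw [he2, Finset.card_sdiff_of_subset (Finset.singleton_subset_iff.mpr (Finset.mem_univ v)),
      Finset.card_singleton, hcard]
  have hmem1 : e₁ ∈ Finset.univ.powerset.filter
      (fun e : Finset V => e.card = Fintype.card V - 1) := by
    simp [Finset.mem_filter, hcard1]
  have hmem2 : e₂ ∈ Finset.univ.powerset.filter
      (fun e : Finset V => e.card = Fintype.card V - 1) := by
    simp [Finset.mem_filter, hcard2]
  obtain ⟨x, hx⟩ := hNne
  have hint1 : (e₁ ∩ N).Nonempty := by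
    refine ⟨x, Finset.mem_inter.mpr ⟨?_, hx⟩⟩
    rw [he1]; simp only [Finset.mem_sdiff, Finset.mem_univ, true_and, Finset.mem_singleton]
    intro h; subst h; exact huN hx
  have hint2 : (e₂ ∩ N).Nonempty := by
    refine ⟨x, Finset.mem_inter.mpr ⟨?_, hx⟩⟩
    rw [he2]; simp only [Finset.mem_sdiff, Finset.mem_univ, true_and, Finset.mem_singleton]
    intro h; subst h; exact hvN hx
  have hv1 : v ∈ e₁ \ N := by
    simp only [he1, Finset.mem_sdiff, Finset.mem_univ, true_and, Finset.mem_singleton]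
    exact ⟨huv.symm, hvN⟩
  have hu2 : u ∈ e₂ \ N := by
    simp only [he2, Finset.mem_sdiff, Finset.mem_univ, true_and, Finset.mem_singleton]
    exact ⟨huv, huN⟩
  rcases hnest0 e₁ hmem1 e₂ hmem2 hint1 hint2 with h | h
  · have := h hv1
    simp [he2] at this
  · have := h hu2
    simp [he1] at this
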